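/- Assume φ is a soliton family with constants ω₀, C, and define q(ω) := (1/2)‖φ_ω‖²_{l²}. Then q'(ω) = ⟨∂_ωφ_ω, φ_ω⟩ = Ω(∂_ωφ[θ,ω], ∂_θφ[θ,ω]) for every θ, and there exist ω₁ ≥ ω₀ and constants 0 < c ≤ K such that c·ω^{-2/3} ≤ q'(ω) ≤ K·ω^{-2/3} for all ω > ω₁; in particular q'(ω) > 0 for ω > ω₁. -/

import Mathlib

noncomputable section

open scoped BigOperators ENNReal
open MeasureTheory Complex Filter

/-! ## Sequence spaces and norms -/

/-- Square-summable complex sequences `ℓ²(ℤ;ℂ)`. -/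
abbrev L2 := lp (fun _ : ℤ => ℂ) 2
/-- Square-summable real sequences `ℓ²(ℤ;ℝ)`. -/
abbrev L2R := lp (fun _ : ℤ => ℝ) 2
/-- Bounded real sequences `ℓ^∞(ℕ₀;ℝ)`. -/
abbrev LinfN := lp (fun _ : ℕ => ℝ) ⊤

/-- Discrete Laplacian on raw complex sequences. -/
def lapC (u : ℤ → ℂ) : ℤ → ℂ := fun x => u (x + 1) - 2 * u x + u (x - 1)

/-- Discrete Laplacian on raw real sequences. -/
def lapR (u : ℤ → ℝ) : ℤ → ℝ := fun x => u (x + 1) - 2 * u x + u (x - 1)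

/-- Exponential weight `e^{a|x|}`. -/
def wt (a : ℝ) (x : ℤ) : ℝ := Real.exp (a * |(x : ℝ)|)

/-- `ℝ≥0∞`-valued weighted `ℓ²` norm `‖u‖_{l²_a} = ‖e^{a|·|}u‖_{l²}`. -/
def el2w (a : ℝ) (u : ℤ → ℂ) : ℝ≥0∞ :=
  (∑' x : ℤ, ((‖u x‖₊ : ℝ≥0∞) * ENNReal.ofReal (wt a x)) ^ (2 : ℕ)) ^ ((1 : ℝ) / 2)

/-- `ℝ≥0∞`-valued `ℓ²` norm. -/
def el2 (u : ℤ → ℂ) : ℝ≥0∞ := el2w 0 u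

/-- `ℝ≥0∞`-valued `ℓ¹` norm. -/
def el1 (u : ℤ → ℂ) : ℝ≥0∞ := ∑' x : ℤ, (‖u x‖₊ : ℝ≥0∞)

/-- `ℝ≥0∞`-valued `ℓ^∞` norm. -/
def elinf (u : ℤ → ℂ) : ℝ≥0∞ := ⨆ x : ℤ, (‖u x‖₊ : ℝ≥0∞)

/-- `L^q` norm in time over the set `I` of an `ℝ≥0∞`-valued function. -/
def LqT (q : ℝ) (I : Set ℝ) (F : ℝ → ℝ≥0∞) : ℝ≥0∞ := (∫⁻ t in I, F t ^ q) ^ (1 / q)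

/-- `L^∞` norm in time over the set `I` of an `ℝ≥0∞`-valued function. -/
def LinfT (I : Set ℝ) (F : ℝ → ℝ≥0∞) : ℝ≥0∞ := essSup F (volume.restrict I)

/-- The `Strichartz` norm `L^∞(I,l²) ∩ L⁶(I,l^∞)` of a time-dependent sequence. -/
def StzT (I : Set ℝ) (F : ℝ → ℤ → ℂ) : ℝ≥0∞ :=
  LinfT I (fun t => el2 (F t)) + LqT 6 I (fun t => elinf (F t))

/-- The `L¹ ∩ L^∞` norm in time of a scalar function. -/
def L1LinfT (I : Set ℝ) (g : ℝ → ℝ) : ℝ≥0∞ :=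
  LqT 1 I (fun t => (‖g t‖₊ : ℝ≥0∞)) + LinfT I (fun t => (‖g t‖₊ : ℝ≥0∞))

/-! ## The discrete Laplacian and its unitary group -/

lemma memℓp_translate (k : ℤ) (u : L2) : Memℓp (fun x : ℤ => u (x + k)) 2 := by
  apply memℓp_gen
  have hs : Summable fun x : ℤ => ‖u x‖ ^ (2 : ℝ≥0∞).toReal :=
    (memℓp_gen_iff (by norm_num)).1 (lp.memℓp u)
  exact ((Equiv.addRight k).summable_iff
    (f := fun x : ℤ => ‖u x‖ ^ (2 : ℝ≥0∞).toReal)).2 hs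

lemma norm_translate (k : ℤ) (u : L2) :
    ‖(⟨fun x : ℤ => u (x + k), memℓp_translate k u⟩ : L2)‖ = ‖u‖ := by
  rw [lp.norm_eq_tsum_rpow (by norm_num), lp.norm_eq_tsum_rpow (by norm_num)]
  congr 1
  exact (Equiv.addRight k).tsum_eq (f := fun x : ℤ => ‖u x‖ ^ (2 : ℝ≥0∞).toReal)

/-- Translation `u ↦ u(· + k)` as a linear map on `ℓ²(ℤ;ℂ)`. -/
def translateLM (k : ℤ) : L2 →ₗ[ℂ] L2 where
  toFun u := ⟨fun x => u (x + k), memℓp_translate k u⟩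
  map_add' u v := by ext x; simp [lp.coeFn_add]; rfl
  map_smul' c u := by ext x; simp [lp.coeFn_smul]

/-- Translation as a continuous linear map on `ℓ²(ℤ;ℂ)`. -/
def translateCLM (k : ℤ) : L2 →L[ℂ] L2 :=
  LinearMap.mkContinuous (translateLM k) 1 (by
    intro u; rw [one_mul]; exact le_of_eq (norm_translate k u))

/-- The discrete Laplacian `(Δ_d u)(x) = u(x+1) - 2u(x) + u(x-1)` as a bounded operator
on `ℓ²(ℤ;ℂ)`. -/
def DeltaD : L2 →L[ℂ] L2 :=
  translateCLM 1 + translateCLM (-1) - 2 • ContinuousLinearMap.id ℂ L2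

lemma DeltaD_apply (u : L2) (x : ℤ) :
    DeltaD u x = u (x + 1) - 2 * u x + u (x - 1) := by
  simp [DeltaD, translateCLM, translateLM, LinearMap.mkContinuous,
    lp.coeFn_add, lp.coeFn_sub, lp.coeFn_smul, sub_eq_add_neg]
  change u (x + 1) + u (x + -1) + -(2 * u x) = u (x + 1) + -(2 * u x) + u (x + -1)
  ring_nf

/-- The Kronecker delta at `0` as an element of `ℓ²(ℤ;ℂ)`. -/
def e0C : L2 := lp.single 2 (0 : ℤ) (1 : ℂ)

lemma norm_e0C : ‖e0C‖ = 1 := by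
  have := lp.norm_single (p := 2) (E := fun _ : ℤ => ℂ) (by norm_num)
    0 (1 : ℂ)
  simpa [e0C] using this

/-- The projection `P₀⊥ u = u - (u,δ₀)δ₀` as a bounded operator on `ℓ²(ℤ;ℂ)`. -/
def P0perp : L2 →L[ℂ] L2 :=
  LinearMap.mkContinuous
    { toFun := fun u => u - (u 0) • e0C
      map_add' := fun u v => by
        have h : (↑(u + v) : ∀ _ : ℤ, ℂ) 0 = u 0 + v 0 := by
          rw [lp.coeFn_add]; rfl
        show (u + v) - ((u + v : L2) 0) • e0C = (u - (u 0) • e0C) + (v - (v 0) • e0C)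
        rw [h, add_smul]; abel
      map_smul' := fun c u => by
        have h : (↑(c • u) : ∀ _ : ℤ, ℂ) 0 = c * u 0 := by
          rw [lp.coeFn_smul]; rfl
        show (c • u) - ((c • u : L2) 0) • e0C = (RingHom.id ℂ) c • (u - (u 0) • e0C)
        rw [h, RingHom.id_apply, mul_smul, ← smul_sub] }
    2 (by
      intro u
      have h2 : ‖u 0‖ ≤ ‖u‖ := lp.norm_apply_le_norm (by norm_num) u 0
      calc ‖u - (u 0) • e0C‖ ≤ ‖u‖ + ‖(u 0) • e0C‖ := norm_sub_le _ _
        _ = ‖u‖ + ‖u 0‖ * ‖e0C‖ := by rw [norm_smul]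
        _ ≤ 2 * ‖u‖ := by rw [norm_e0C]; linarith)

lemma P0perp_apply (u : L2) (x : ℤ) :
    P0perp u x = if x = 0 then 0 else u x := by
  have h : P0perp u = u - (u 0) • e0C := rfl
  rw [h, lp.coeFn_sub, lp.coeFn_smul]
  by_cases hx : x = 0 <;>
    simp [hx, e0C, lp.single_apply, Pi.sub_apply, Pi.smul_apply]

/-- `Δ₀ = P₀⊥ Δ_d P₀⊥`, the discrete Laplacian restricted to `P₀⊥ ℓ²`. -/
def Delta0 : L2 →L[ℂ] L2 := P0perp.comp (DeltaD.comp P0perp)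

/-- The unitary group `e^{itΔ_d}`. -/
def Ud (t : ℝ) : L2 →L[ℂ] L2 := NormedSpace.exp ((Complex.I * t) • DeltaD)

/-- The unitary group `e^{itΔ₀}`. -/
def U0 (t : ℝ) : L2 →L[ℂ] L2 := NormedSpace.exp ((Complex.I * t) • Delta0)

/-- Domination criterion for membership in `ℓ²`. -/
lemma memℓp_of_le (u : L2) (f : ℤ → ℂ) (h : ∀ x, ‖f x‖ ≤ ‖u x‖) : Memℓp f 2 := by
  apply memℓp_gen
  have hs : Summable fun x : ℤ => ‖u x‖ ^ (2 : ℝ≥0∞).toReal :=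
    (memℓp_gen_iff (by norm_num)).1 (lp.memℓp u)
  refine hs.of_nonneg_of_le (fun x => ?_) (fun x => ?_)
  · positivity
  · exact Real.rpow_le_rpow (norm_nonneg _) (h x) (by norm_num)

/-- The restriction `P₊` to `{x ≥ 1}`. -/
def Pplus (u : L2) : L2 :=
  ⟨fun x => if 1 ≤ x then u x else 0,
    memℓp_of_le u _ (fun x => by by_cases h : 1 ≤ x <;> simp [h])⟩

/-- The restriction `P₋` to `{x ≤ -1}`. -/
def Pminus (u : L2) : L2 :=
  ⟨fun x => if x ≤ -1 then u x else 0,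
    memℓp_of_le u _ (fun x => by by_cases h : x ≤ -1 <;> simp [h])⟩

/-- Duhamel term `∫₀ᵗ e^{i(t-s)Δ₀} P₀⊥ f(s) ds`. -/
def duhamel (f : ℝ → L2) (t : ℝ) : L2 := ∫ s in (0 : ℝ)..t, U0 (t - s) (P0perp (f s))

/-! ## Soliton families -/

/-- The Kronecker delta at `0` in `ℓ²(ℤ;ℝ)`. -/
def e0R : L2R := lp.single 2 (0 : ℤ) (1 : ℝ)

/-- `P₀⊥` on real `ℓ²`. -/
def P0R (u : L2R) : L2R := u - (u 0) • e0R

/-- A family of solitons `φ_ω`, `ω ∈ (ω₀,∞)`, as in Proposition 1.2 of the paper.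
The data is recorded through the weighted sequences `Φ ω = e^{10|·|} φ_ω ∈ ℓ²(ℤ;ℝ)`
(so that `φ_ω = e^{-10|·|} Φ ω`, the map `ω ↦ φ_ω` is twice continuously differentiable
into `l²_{10}` iff `ω ↦ Φ ω` is so into `ℓ²`, and `l²_{10}`-norm statements about `φ_ω`
are plain `ℓ²`-norm statements about `Φ ω`), together with its first and second
derivatives in `ω`.  The fields state: `ω ↦ φ_ω` is `C²` from `(ω₀,∞)` to `l²_{10}`;
`φ_ω` solves `0 = -Δ_d φ_ω + ω φ_ω - |φ_ω|⁶ φ_ω`; and the two weighted estimates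
`∑_{j=0}^{2} ω^j ‖∂_ω^j φ_ω - ∂_ω^j(ω^{1/6} δ₀)‖_{l²_{10}} ≤ C ω^{-5/6}` and
`∑_{j=0}^{2} ω^j ‖P₀⊥ ∂_ω^j φ_ω‖_{l²_{10}} ≤ C ω^{-5/6}` hold (note
`∂_ω(ω^{1/6}δ₀) = (1/6)ω^{-5/6}δ₀` and `∂_ω²(ω^{1/6}δ₀) = -(5/36)ω^{-11/6}δ₀`). -/
structure SolitonFamily (ω₀ C : ℝ) : Type where
  Φ : ℝ → L2R
  Φ' : ℝ → L2R
  Φ'' : ℝ → L2R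
  hasDeriv1 : ∀ ω ∈ Set.Ioi ω₀, HasDerivAt Φ (Φ' ω) ω
  hasDeriv2 : ∀ ω ∈ Set.Ioi ω₀, HasDerivAt Φ' (Φ'' ω) ω
  contDeriv2 : ContinuousOn Φ'' (Set.Ioi ω₀)
  eqn : ∀ ω ∈ Set.Ioi ω₀, ∀ x : ℤ,
    0 = -(lapR (fun y => wt (-10) y * Φ ω y) x) + ω * (wt (-10) x * Φ ω x)
        - |wt (-10) x * Φ ω x| ^ 6 * (wt (-10) x * Φ ω x)
  approx : ∀ ω ∈ Set.Ioi ω₀,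
      ‖Φ ω - (ω ^ ((1 : ℝ) / 6)) • e0R‖
    + ω * ‖Φ' ω - ((1 / 6 : ℝ) * ω ^ (-(5 : ℝ) / 6)) • e0R‖
    + ω ^ 2 * ‖Φ'' ω - ((-5 / 36 : ℝ) * ω ^ (-(11 : ℝ) / 6)) • e0R‖
      ≤ C * ω ^ (-(5 : ℝ) / 6)
  perp : ∀ ω ∈ Set.Ioi ω₀,
      ‖P0R (Φ ω)‖ + ω * ‖P0R (Φ' ω)‖ + ω ^ 2 * ‖P0R (Φ'' ω)‖ ≤ C * ω ^ (-(5 : ℝ) / 6)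

namespace SolitonFamily
variable {ω₀ C : ℝ} (sf : SolitonFamily ω₀ C)

/-- The soliton `φ_ω` as a raw real sequence. -/
def phiF (ω : ℝ) : ℤ → ℝ := fun x => wt (-10) x * sf.Φ ω x
/-- `∂_ω φ_ω` as a raw real sequence. -/
def dphiF (ω : ℝ) : ℤ → ℝ := fun x => wt (-10) x * sf.Φ' ω x
/-- `∂²_ω φ_ω` as a raw real sequence. -/
def d2phiF (ω : ℝ) : ℤ → ℝ := fun x => wt (-10) x * sf.Φ'' ω x
/-- `φ[θ,ω] = e^{iθ} φ_ω`. -/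
def phiC (θ ω : ℝ) : ℤ → ℂ := fun x => Complex.exp (Complex.I * θ) * (sf.phiF ω x : ℂ)
/-- `∂_θ φ[θ,ω] = i e^{iθ} φ_ω`. -/
def dthphiC (θ ω : ℝ) : ℤ → ℂ :=
  fun x => Complex.I * Complex.exp (Complex.I * θ) * (sf.phiF ω x : ℂ)
/-- `∂_ω φ[θ,ω] = e^{iθ} ∂_ω φ_ω`. -/
def dOmphiC (θ ω : ℝ) : ℤ → ℂ := fun x => Complex.exp (Complex.I * θ) * (sf.dphiF ω x : ℂ)

end SolitonFamily

/-- The real inner product `⟨u,v⟩ = Re ∑_x u(x) conj(v(x))`. -/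
def rip (u v : ℤ → ℂ) : ℝ := ∑' x : ℤ, (u x * (starRingEnd ℂ) (v x)).re

/-- The symplectic form `Ω(u,v) = ⟨iu, v⟩`. -/
def Om (u v : ℤ → ℂ) : ℝ := rip (fun x => Complex.I * u x) v

namespace SolitonFamily
variable {ω₀ C : ℝ} (sf : SolitonFamily ω₀ C)

/-- `H_c[θ,ω] = {u ∈ ℓ² : Ω(u, ∂_θφ[θ,ω]) = Ω(u, ∂_ωφ[θ,ω]) = 0}`. -/
def Hc (θ ω : ℝ) : Set L2 :=
  {v : L2 | Om (fun x => v x) (sf.dthphiC θ ω) = 0 ∧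
            Om (fun x => v x) (sf.dOmphiC θ ω) = 0}

/-- The tube `T_{ω*}(r) = {u : inf_θ ‖u - φ[θ,ω*]‖_{l²} < r}` around the soliton orbit. -/
def Tset (ωs r : ℝ) : Set L2 :=
  {u : L2 | (⨅ θ : ℝ, el2 (fun x => u x - sf.phiC θ ωs x)) < ENNReal.ofReal r}

end SolitonFamily

/-- `u` is a `C¹` solution of DNLS `i ∂_t u = -Δ_d u - |u|⁶ u` on the time set `S`,
with derivative `u'`. -/
def IsDNLS (u u' : ℝ → L2) (S : Set ℝ) : Prop :=
  ContinuousOn u' S ∧ ∀ t ∈ S, HasDerivWithinAt u (u' t) S t ∧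
    ∀ x : ℤ, Complex.I * (u' t) x
      = -(lapC (fun y => (u t) y) x) - (‖(u t) x‖ : ℂ) ^ 6 * (u t) x

/-- The modulation remainder `ξ(t) = u(t) - φ[θ(t),ω(t)]` as a raw sequence. -/
def xiF {ω₀ C : ℝ} (sf : SolitonFamily ω₀ C) (u : ℝ → L2) (θ ω : ℝ → ℝ) (t : ℝ) :
    ℤ → ℂ := fun x => u t x - sf.phiC (θ t) (ω t) x

/-- `η(t) = P₀⊥ ξ(t)` as a raw sequence. -/
def etaF {ω₀ C : ℝ} (sf : SolitonFamily ω₀ C) (u : ℝ → L2) (θ ω : ℝ → ℝ) (t : ℝ) :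
    ℤ → ℂ := fun x => if x = 0 then 0 else xiF sf u θ ω t x

/-- The scalar coefficient appearing in the inverse `Q[θ,ω]` of `P₀⊥|_{H_c[θ,ω]}`. -/
def Qcoef {ω₀ C : ℝ} (sf : SolitonFamily ω₀ C) (θ ω : ℝ) (u : L2) : ℂ :=
  Complex.exp (Complex.I * θ) *
    (((-(sf.phiF ω 0)⁻¹ * Om (fun x => u x) (sf.dthphiC θ ω) : ℝ) : ℂ)
      + Complex.I * (((sf.dphiF ω 0)⁻¹ * Om (fun x => u x) (sf.dOmphiC θ ω) : ℝ) : ℂ))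

/-- The map `Q[θ,ω] u = u + e^{iθ}(-φ_ω(0)⁻¹ Ω(u,∂_θφ) + i (∂_ωφ_ω(0))⁻¹ Ω(u,∂_ωφ)) δ₀`. -/
def Qmap {ω₀ C : ℝ} (sf : SolitonFamily ω₀ C) (θ ω : ℝ) (u : L2) : L2 :=
  u + lp.single 2 (0 : ℤ) (Qcoef sf θ ω u)

/-- The (ℝ-linear) linearized operator
`H[θ,ω]u = -Δ_d u - 4|φ[θ,ω]|⁶ u - 3|φ[θ,ω]|⁴ φ[θ,ω]² conj(u)`. -/
def Hop {ω₀ C : ℝ} (sf : SolitonFamily ω₀ C) (θ ω : ℝ) (u : ℤ → ℂ) : ℤ → ℂ :=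
  fun x => -(lapC u x) - 4 * (‖sf.phiC θ ω x‖ : ℂ) ^ 6 * u x
    - 3 * (‖sf.phiC θ ω x‖ : ℂ) ^ 4 * (sf.phiC θ ω x) ^ 2 * (starRingEnd ℂ) (u x)

/-- The soliton of the appendix (anti-continuous limit) construction:
`φ_ω = ω^{1/6}((1 + ω⁻¹ψ₀(ω⁻¹))δ₀ + ∑_{j≥1} ω^{-j} ψ_j(ω⁻¹)(δ_j + δ_{-j}))`. -/
def phiOf (ψ : ℝ → LinfN) (ω : ℝ) : ℤ → ℝ :=
  fun x => ω ^ ((1 : ℝ) / 6) *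
    (if x = 0 then 1 + ω⁻¹ * ψ ω⁻¹ 0
     else ω ^ (-(x.natAbs : ℝ)) * ψ ω⁻¹ x.natAbs)



/-! ## Auxiliary material for `qprime_asymptotics` -/

open scoped RealInnerProductSpace

lemma rpow_helper {ω : ℝ} (hω : 0 < ω) {s t u : ℝ} (h : s + t = u) :
    ω ^ s * ω ^ t = ω ^ u := by rw [← Real.rpow_add hω, h]

lemma wt_le_one (x : ℤ) : wt (-10) x ≤ 1 := by
  have h : (-10 : ℝ) * |(x : ℝ)| ≤ 0 := by
    have := abs_nonneg (x : ℝ); nlinarith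
  simpa [wt] using Real.exp_le_one_iff.mpr h

lemma wt_nonneg (a : ℝ) (x : ℤ) : 0 ≤ wt a x := (Real.exp_pos _).le

lemma wt_mul_norm_le (x : ℤ) (r : ℝ) : ‖wt (-10) x * r‖ ≤ ‖r‖ := by
  rw [norm_mul, Real.norm_of_nonneg (wt_nonneg _ _)]
  have h1 := wt_le_one x
  have h0 := wt_nonneg (-10) x
  nlinarith [norm_nonneg r]

lemma memℓp_wt (u : L2R) : Memℓp (fun x : ℤ => wt (-10) x * u x) 2 := by
  apply memℓp_gen
  have hs : Summable fun x : ℤ => ‖u x‖ ^ (2 : ℝ≥0∞).toReal :=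
    (memℓp_gen_iff (by norm_num)).1 (lp.memℓp u)
  refine hs.of_nonneg_of_le (fun x => by positivity) (fun x => ?_)
  exact Real.rpow_le_rpow (norm_nonneg _) (wt_mul_norm_le x (u x)) (by norm_num)

/-- Multiplication by the weight `e^{-10|x|}` as a linear map on `ℓ²(ℤ;ℝ)`. -/
def MwtLM : L2R →ₗ[ℝ] L2R where
  toFun u := ⟨fun x => wt (-10) x * u x, memℓp_wt u⟩
  map_add' u v := by ext x; simp [lp.coeFn_add]; exact mul_add _ _ _
  map_smul' c u := by ext x; simp [lp.coeFn_smul]; ring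

lemma norm_MwtLM_le (u : L2R) : ‖MwtLM u‖ ≤ ‖u‖ := by
  rw [lp.norm_eq_tsum_rpow (by norm_num) (MwtLM u), lp.norm_eq_tsum_rpow (by norm_num) u]
  apply Real.rpow_le_rpow (tsum_nonneg fun x => by positivity) ?_ (by norm_num)
  refine Summable.tsum_le_tsum (fun x => ?_) ?_ ?_
  · exact Real.rpow_le_rpow (norm_nonneg _) (wt_mul_norm_le x (u x)) (by norm_num)
  · exact (memℓp_gen_iff (by norm_num)).1 (lp.memℓp (MwtLM u))
  · exact (memℓp_gen_iff (by norm_num)).1 (lp.memℓp u)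

/-- Multiplication by the weight as a continuous linear map. -/
def Mwt : L2R →L[ℝ] L2R :=
  LinearMap.mkContinuous MwtLM 1 (fun u => by rw [one_mul]; exact norm_MwtLM_le u)

lemma Mwt_apply (u : L2R) (x : ℤ) : Mwt u x = wt (-10) x * u x := rfl

lemma norm_Mwt_le (u : L2R) : ‖Mwt u‖ ≤ ‖u‖ := norm_MwtLM_le u

lemma wt_zero (a : ℝ) : wt a 0 = 1 := by simp [wt]

lemma Mwt_e0R : Mwt e0R = e0R := by
  ext x
  rw [Mwt_apply]
  by_cases h : x = 0
  · subst h; simp [e0R, lp.single_apply, wt_zero]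
  · simp [e0R, lp.single_apply, h]

lemma norm_e0R : ‖e0R‖ = 1 := by
  have := lp.norm_single (p := 2) (E := fun _ : ℤ => ℝ) (by norm_num)
    0 (1 : ℝ)
  simpa [e0R] using this

lemma inner_e0R_self : ⟪e0R, e0R⟫ = 1 := by
  rw [real_inner_self_eq_norm_sq, norm_e0R]; norm_num

namespace SolitonFamily
variable {ω₀ C : ℝ} (sf : SolitonFamily ω₀ C)

lemma tsum_sq_eq_inner (w : ℝ) :
    ∑' x : ℤ, (sf.phiF w x) ^ 2 = ⟪Mwt (sf.Φ w), Mwt (sf.Φ w)⟫ := by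
  rw [lp.inner_eq_tsum]
  exact tsum_congr fun x => by
    simp [Mwt_apply, SolitonFamily.phiF, RCLike.inner_apply]; rw [← abs_mul, sq_abs]

lemma tsum_mul_eq_inner (w : ℝ) :
    ∑' x : ℤ, sf.dphiF w x * sf.phiF w x = ⟪Mwt (sf.Φ' w), Mwt (sf.Φ w)⟫ := by
  rw [lp.inner_eq_tsum]
  exact tsum_congr fun x => by
    simp [Mwt_apply, SolitonFamily.phiF, SolitonFamily.dphiF, RCLike.inner_apply]; try ring

end SolitonFamily

lemma om_term (θ d p : ℝ) :
    (Complex.I * (Complex.exp (Complex.I * θ) * (d : ℂ)) *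
      (starRingEnd ℂ) (Complex.I * Complex.exp (Complex.I * θ) * (p : ℂ))).re = d * p := by
  have hE : Complex.exp (Complex.I * θ) * (starRingEnd ℂ) (Complex.exp (Complex.I * θ)) = 1 := by
    rw [Complex.mul_conj]
    have habs : ‖(Complex.exp (Complex.I * θ))‖ = 1 := by
      rw [Complex.norm_exp]; simp
    rw [← Complex.sq_norm, habs]
    norm_num
  have h : Complex.I * (Complex.exp (Complex.I * θ) * (d : ℂ)) *
      (starRingEnd ℂ) (Complex.I * Complex.exp (Complex.I * θ) * (p : ℂ))
      = ((d * p : ℝ) : ℂ) := by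
    rw [map_mul, map_mul, Complex.conj_I, Complex.conj_ofReal]
    have : Complex.I * (Complex.exp (Complex.I * θ) * (d : ℂ)) *
        (-Complex.I * (starRingEnd ℂ) (Complex.exp (Complex.I * θ)) * (p : ℂ))
        = -(Complex.I * Complex.I) *
            (Complex.exp (Complex.I * θ) * (starRingEnd ℂ) (Complex.exp (Complex.I * θ))) *
            ((d : ℂ) * (p : ℂ)) := by ring
    rw [this, hE, Complex.I_mul_I]
    push_cast
    ring
  rw [h, Complex.ofReal_re]


set_option maxHeartbeats 1600000

/-- For `q(ω) = ½‖φ_ω‖²_{l²}` one has `q'(ω) = ⟨∂_ωφ_ω,φ_ω⟩ = Ω(∂_ωφ[θ,ω],∂_θφ[θ,ω])`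
and `q'(ω) ∼ ω^{-2/3} > 0` for large `ω` (formula (3.3) of the paper). -/
theorem qprime_asymptotics {ω₀ C : ℝ} (sf : SolitonFamily ω₀ C) :
    ∃ ω₁ c K : ℝ, ω₀ ≤ ω₁ ∧ 0 < c ∧ c ≤ K ∧
      ∀ ω : ℝ, ω₁ < ω →
        HasDerivAt (fun w => (1 / 2 : ℝ) * ∑' x : ℤ, (sf.phiF w x) ^ 2)
          (∑' x : ℤ, sf.dphiF ω x * sf.phiF ω x) ω ∧
        (∀ θ : ℝ, (∑' x : ℤ, sf.dphiF ω x * sf.phiF ω x)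
            = Om (sf.dOmphiC θ ω) (sf.dthphiC θ ω)) ∧
        c * ω ^ (-(2 : ℝ) / 3) ≤ ∑' x : ℤ, sf.dphiF ω x * sf.phiF ω x ∧
        (∑' x : ℤ, sf.dphiF ω x * sf.phiF ω x) ≤ K * ω ^ (-(2 : ℝ) / 3) := by
  classical
  set B := |C| with hBdef
  have hB : 0 ≤ B := abs_nonneg C
  have hS : 0 ≤ B ^ 2 + 7 * B / 6 := by positivity
  refine ⟨max ω₀ (12 * (B ^ 2 + 7 * B / 6) + 1), 1 / 12, 1 / 4,
    le_max_left _ _, by norm_num, by norm_num, ?_⟩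
  intro ω hω
  have hω₀ : ω ∈ Set.Ioi ω₀ := lt_of_le_of_lt (le_max_left _ _) hω
  have hωS : 12 * (B ^ 2 + 7 * B / 6) + 1 < ω := lt_of_le_of_lt (le_max_right _ _) hω
  have h1ω : 1 ≤ ω := by linarith
  have hω0 : (0 : ℝ) < ω := by linarith
  -- derivative part
  have hΦ := sf.hasDeriv1 ω hω₀
  have hMd : HasDerivAt (fun w => Mwt (sf.Φ w)) (Mwt (sf.Φ' ω)) ω := by
    exact Mwt.hasFDerivAt.comp_hasDerivAt ω hΦ
  have hinner := HasDerivAt.inner ℝ hMd hMd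
  have hfun : (fun w => (1 / 2 : ℝ) * ∑' x : ℤ, (sf.phiF w x) ^ 2)
      = fun w => (1 / 2 : ℝ) * ⟪Mwt (sf.Φ w), Mwt (sf.Φ w)⟫ :=
    funext fun w => by rw [sf.tsum_sq_eq_inner]
  refine ⟨?_, ?_, ?_⟩
  · rw [hfun, sf.tsum_mul_eq_inner]
    have h := hinner.const_mul ((1 : ℝ) / 2)
    refine h.congr_deriv ?_
    rw [real_inner_comm (Mwt (sf.Φ ω)) (Mwt (sf.Φ' ω))]
    ring
  · intro θ
    have : Om (sf.dOmphiC θ ω) (sf.dthphiC θ ω)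
        = ∑' x : ℤ, sf.dphiF ω x * sf.phiF ω x := by
      simp only [Om, rip, SolitonFamily.dOmphiC, SolitonFamily.dthphiC]
      exact tsum_congr fun x => om_term θ (sf.dphiF ω x) (sf.phiF ω x)
    exact this.symm
  -- asymptotics
  rw [sf.tsum_mul_eq_inner]
  have happ := sf.approx ω hω₀
  have hpos56 : (0 : ℝ) < ω ^ (-(5 : ℝ) / 6) := Real.rpow_pos_of_pos hω0 _
  have hCB : C * ω ^ (-(5 : ℝ) / 6) ≤ B * ω ^ (-(5 : ℝ) / 6) :=
    mul_le_mul_of_nonneg_right (le_abs_self C) hpos56.le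
  have hn1 : (0 : ℝ) ≤ ω * ‖sf.Φ' ω - ((1 / 6 : ℝ) * ω ^ (-(5 : ℝ) / 6)) • e0R‖ :=
    mul_nonneg hω0.le (norm_nonneg _)
  have hn2 : (0 : ℝ) ≤ ω ^ 2 * ‖sf.Φ'' ω - ((-5 / 36 : ℝ) * ω ^ (-(11 : ℝ) / 6)) • e0R‖ :=
    mul_nonneg (by positivity) (norm_nonneg _)
  have hn0 : (0 : ℝ) ≤ ‖sf.Φ ω - (ω ^ ((1 : ℝ) / 6)) • e0R‖ := norm_nonneg _
  have ha : ‖sf.Φ ω - (ω ^ ((1 : ℝ) / 6)) • e0R‖ ≤ B * ω ^ (-(5 : ℝ) / 6) := by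
    linarith [happ]
  have ha'ω : ω * ‖sf.Φ' ω - ((1 / 6 : ℝ) * ω ^ (-(5 : ℝ) / 6)) • e0R‖
      ≤ B * ω ^ (-(5 : ℝ) / 6) := by
    linarith [happ]
  set a : L2R := sf.Φ ω - (ω ^ ((1 : ℝ) / 6)) • e0R with hadef
  set a' : L2R := sf.Φ' ω - ((1 / 6 : ℝ) * ω ^ (-(5 : ℝ) / 6)) • e0R with ha'def
  have ha' : ‖a'‖ ≤ B * ω ^ (-(11 : ℝ) / 6) := by
    have key : ω * (B * ω ^ (-(11 : ℝ) / 6)) = B * ω ^ (-(5 : ℝ) / 6) := by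
      have h1 : ω ^ (1 : ℝ) * ω ^ (-(11 : ℝ) / 6) = ω ^ (-(5 : ℝ) / 6) :=
        rpow_helper hω0 (by norm_num)
      rw [Real.rpow_one] at h1
      rw [mul_left_comm, h1]
    exact (mul_le_mul_iff_right₀ hω0).mp (by rw [key]; exact ha'ω)
  -- decomposition of the inner product
  have hMΦ : Mwt (sf.Φ ω) = Mwt a + (ω ^ ((1 : ℝ) / 6)) • e0R := by
    have : sf.Φ ω = a + (ω ^ ((1 : ℝ) / 6)) • e0R := by rw [hadef]; abel
    rw [this, map_add, Mwt.map_smul, Mwt_e0R]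
  have hMΦ' : Mwt (sf.Φ' ω) = Mwt a' + ((1 / 6 : ℝ) * ω ^ (-(5 : ℝ) / 6)) • e0R := by
    have : sf.Φ' ω = a' + ((1 / 6 : ℝ) * ω ^ (-(5 : ℝ) / 6)) • e0R := by rw [ha'def]; abel
    rw [this, map_add, Mwt.map_smul, Mwt_e0R]
  have hss : ω ^ (-(5 : ℝ) / 6) * ω ^ ((1 : ℝ) / 6) = ω ^ (-(2 : ℝ) / 3) :=
    rpow_helper hω0 (by norm_num)
  have hT : ⟪Mwt (sf.Φ' ω), Mwt (sf.Φ ω)⟫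
      = ⟪Mwt a', Mwt a⟫ + ω ^ ((1 : ℝ) / 6) * ⟪Mwt a', e0R⟫
        + ((1 / 6 : ℝ) * ω ^ (-(5 : ℝ) / 6)) * ⟪e0R, Mwt a⟫
        + (1 / 6) * ω ^ (-(2 : ℝ) / 3) := by
    rw [hMΦ, hMΦ', inner_add_left, inner_add_right, inner_add_right,
      real_inner_smul_left, real_inner_smul_left, real_inner_smul_right,
      real_inner_smul_right, inner_e0R_self]
    linear_combination (1 / 6 : ℝ) * hss
  -- bounds on the error terms
  have hMa : ‖Mwt a‖ ≤ B * ω ^ (-(5 : ℝ) / 6) := (norm_Mwt_le a).trans ha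
  have hMa' : ‖Mwt a'‖ ≤ B * ω ^ (-(11 : ℝ) / 6) := (norm_Mwt_le a').trans ha'
  have h1 : |⟪Mwt a', Mwt a⟫| ≤ (B * ω ^ (-(11 : ℝ) / 6)) * (B * ω ^ (-(5 : ℝ) / 6)) :=
    (abs_real_inner_le_norm _ _).trans
      (mul_le_mul hMa' hMa (norm_nonneg _) (by positivity))
  have h2 : |⟪Mwt a', e0R⟫| ≤ B * ω ^ (-(11 : ℝ) / 6) :=
    (abs_real_inner_le_norm _ _).trans (by rw [norm_e0R, mul_one]; exact hMa')
  have h3 : |⟪e0R, Mwt a⟫| ≤ B * ω ^ (-(5 : ℝ) / 6) :=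
    (abs_real_inner_le_norm _ _).trans (by rw [norm_e0R, one_mul]; exact hMa)
  set z : ℝ := ω⁻¹ with hzdef
  have hz0 : (0 : ℝ) < z := inv_pos.mpr hω0
  have hz1 : z ≤ 1 := by
    rw [hzdef]
    exact inv_le_one_of_one_le₀ h1ω
  have hzω : z * ω = 1 := inv_mul_cancel₀ hω0.ne'
  have hzS : z * (12 * (B ^ 2 + 7 * B / 6) + 1) ≤ 1 := by
    calc z * (12 * (B ^ 2 + 7 * B / 6) + 1) ≤ z * ω :=
          mul_le_mul_of_nonneg_left hωS.le hz0.le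
      _ = 1 := hzω
  have e1 : ω ^ (-(1 : ℝ)) = z := by rw [Real.rpow_neg_one, hzdef]
  have e2 : ω ^ (-(2 : ℝ)) = z ^ 2 := by
    rw [show (-(2 : ℝ)) = (-1) + (-1) by norm_num, Real.rpow_add hω0,
      Real.rpow_neg_one, hzdef]; ring
  have p1 : (B * ω ^ (-(11 : ℝ) / 6)) * (B * ω ^ (-(5 : ℝ) / 6))
      = B ^ 2 * (z ^ 2 * ω ^ (-(2 : ℝ) / 3)) := by
    rw [← e2, rpow_helper hω0 (show (-(2 : ℝ)) + (-(2 : ℝ) / 3) = -(8 : ℝ) / 3 by norm_num),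
      ← rpow_helper hω0 (show (-(11 : ℝ) / 6) + (-(5 : ℝ) / 6) = -(8 : ℝ) / 3 by norm_num)]
    ring
  have p2 : ω ^ ((1 : ℝ) / 6) * (B * ω ^ (-(11 : ℝ) / 6)) = B * (z * ω ^ (-(2 : ℝ) / 3)) := by
    rw [← e1, rpow_helper hω0 (show (-(1 : ℝ)) + (-(2 : ℝ) / 3) = -(5 : ℝ) / 3 by norm_num),
      ← rpow_helper hω0 (show ((1 : ℝ) / 6) + (-(11 : ℝ) / 6) = -(5 : ℝ) / 3 by norm_num)]
    ring
  have p3 : ((1 / 6 : ℝ) * ω ^ (-(5 : ℝ) / 6)) * (B * ω ^ (-(5 : ℝ) / 6))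
      = (B / 6) * (z * ω ^ (-(2 : ℝ) / 3)) := by
    rw [← e1, rpow_helper hω0 (show (-(1 : ℝ)) + (-(2 : ℝ) / 3) = -(5 : ℝ) / 3 by norm_num),
      ← rpow_helper hω0 (show (-(5 : ℝ) / 6) + (-(5 : ℝ) / 6) = -(5 : ℝ) / 3 by norm_num)]
    ring
  have hω23 : (0 : ℝ) ≤ ω ^ (-(2 : ℝ) / 3) := (Real.rpow_pos_of_pos hω0 _).le
  have hs16 : (0 : ℝ) ≤ ω ^ ((1 : ℝ) / 6) := (Real.rpow_pos_of_pos hω0 _).le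
  have hs56 : (0 : ℝ) ≤ (1 / 6 : ℝ) * ω ^ (-(5 : ℝ) / 6) := by positivity
  have hzz : z ^ 2 ≤ z := by
    have h := mul_le_mul_of_nonneg_right hz1 hz0.le
    rw [one_mul] at h
    rw [sq]; exact h
  have hB2 : B ^ 2 * z ^ 2 ≤ B ^ 2 * z := mul_le_mul_of_nonneg_left hzz (sq_nonneg B)
  have hzbound : B ^ 2 * z ^ 2 + B * z + (B / 6) * z ≤ 1 / 12 := by
    linarith [hzS, hB2, hz0.le]
  have hsum : B ^ 2 * (z ^ 2 * ω ^ (-(2 : ℝ) / 3)) + B * (z * ω ^ (-(2 : ℝ) / 3))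
      + (B / 6) * (z * ω ^ (-(2 : ℝ) / 3)) ≤ (1 / 12) * ω ^ (-(2 : ℝ) / 3) := by
    have := mul_le_mul_of_nonneg_right hzbound hω23
    linarith [this]
  -- two-sided bounds for each error term
  have t1u : ⟪Mwt a', Mwt a⟫ ≤ B ^ 2 * (z ^ 2 * ω ^ (-(2 : ℝ) / 3)) := by
    rw [← p1]; exact (le_abs_self _).trans h1
  have t1l : -(B ^ 2 * (z ^ 2 * ω ^ (-(2 : ℝ) / 3))) ≤ ⟪Mwt a', Mwt a⟫ := by
    rw [← p1]; linarith [neg_abs_le ⟪Mwt a', Mwt a⟫, h1]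
  have hb2 : ω ^ ((1 : ℝ) / 6) * |⟪Mwt a', e0R⟫| ≤ B * (z * ω ^ (-(2 : ℝ) / 3)) := by
    rw [← p2]; exact mul_le_mul_of_nonneg_left h2 hs16
  have t2u : ω ^ ((1 : ℝ) / 6) * ⟪Mwt a', e0R⟫ ≤ B * (z * ω ^ (-(2 : ℝ) / 3)) := by
    refine le_trans ?_ hb2
    exact mul_le_mul_of_nonneg_left (le_abs_self _) hs16
  have t2l : -(B * (z * ω ^ (-(2 : ℝ) / 3))) ≤ ω ^ ((1 : ℝ) / 6) * ⟪Mwt a', e0R⟫ := by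
    have h := mul_le_mul_of_nonneg_left (neg_abs_le ⟪Mwt a', e0R⟫) hs16
    rw [mul_neg] at h
    linarith [hb2]
  have hb3 : ((1 / 6 : ℝ) * ω ^ (-(5 : ℝ) / 6)) * |⟪e0R, Mwt a⟫|
      ≤ (B / 6) * (z * ω ^ (-(2 : ℝ) / 3)) := by
    rw [← p3]; exact mul_le_mul_of_nonneg_left h3 hs56
  have t3u : ((1 / 6 : ℝ) * ω ^ (-(5 : ℝ) / 6)) * ⟪e0R, Mwt a⟫
      ≤ (B / 6) * (z * ω ^ (-(2 : ℝ) / 3)) := by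
    refine le_trans ?_ hb3
    exact mul_le_mul_of_nonneg_left (le_abs_self _) hs56
  have t3l : -((B / 6) * (z * ω ^ (-(2 : ℝ) / 3)))
      ≤ ((1 / 6 : ℝ) * ω ^ (-(5 : ℝ) / 6)) * ⟪e0R, Mwt a⟫ := by
    have h := mul_le_mul_of_nonneg_left (neg_abs_le ⟪e0R, Mwt a⟫) hs56
    rw [mul_neg] at h
    linarith [hb3]
  constructor
  · rw [hT]; linarith
  · rw [hT]; linarith


end
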